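/- Let D be any diagram of the n×n grid and let F be a column-strict flagged filling of D. Then there exists a column-strict flagged filling G of D such that for each column m, the set of entries in column m of G equals the set of entries in column m of F (in particular wt(G) = wt(F)), and such that for each column m and each entry v appearing in column m of G with v ∈ D_m, the box (v,m) of G is filled with v. -/

import Mathlib

open Finset


/-- The set `F(D)` of column-strict flagged fillings of the diagram `D`: a filling
assigns to each box `(i, j)` of `D` a value in `Fin n` (the value `v` standing for the
positive integer `v + 1`), the entries in each column are distinct (column-strict), and
the entry in a box in row `i` is at most `i` (flagged). -/
def Fillings (n : ℕ) (D : Fin n → Finset (Fin n)) :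
    Set ((j : Fin n) → {i : Fin n // i ∈ D j} → Fin n) :=
  {F | (∀ j, Function.Injective (F j)) ∧
       ∀ (j : Fin n) (i : {i : Fin n // i ∈ D j}), F j i ≤ (i : Fin n)}

/-- The weight of a filling: `wt n D F k` is the number of entries of `F` equal to `k`. -/
def wt (n : ℕ) (D : Fin n → Finset (Fin n))
    (F : (j : Fin n) → {i : Fin n // i ∈ D j} → Fin n) : Fin n → ℕ :=
  fun k => ∑ j, ((D j).attach.filter fun i => F j i = k).card

/-- Optimization of a filling: for every column-strict flagged filling `F` of a diagram
`D` there is a column-strict flagged filling `G` of `D` which, column by column, uses the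
same set of entries as `F` (so in particular `wt G = wt F`), and such that whenever an
entry `v` appears in column `m` of `G` and `v ∈ D m` (i.e. the box `(v, m)` is a box of
`D`), the box `(v, m)` of `G` is filled with `v`. -/


lemma filter_card_of_inj {n : ℕ} (S : Finset (Fin n)) (g : {i : Fin n // i ∈ S} → Fin n)
    (hg : Function.Injective g) (k : Fin n) :
    (S.attach.filter (fun i => g i = k)).card = if k ∈ S.attach.image g then 1 else 0 := by
  split_ifs with h
  · obtain ⟨a, ha, hak⟩ := mem_image.mp h
    rw [card_eq_one]
    refine ⟨a, ?_⟩
    ext b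
    simp only [mem_filter, mem_singleton, mem_attach, true_and]
    constructor
    · intro hb; exact hg (hb.trans hak.symm)
    · rintro rfl; exact hak
  · rw [card_eq_zero, filter_eq_empty_iff]
    intro a ha hak
    exact h (mem_image.mpr ⟨a, ha, hak⟩)

lemma col_aux (n : ℕ) (S : Finset (Fin n)) :
    ∀ N : ℕ, ∀ f : {i : Fin n // i ∈ S} → Fin n,
      (S.attach.filter (fun i => f i ≠ (i : Fin n))).card ≤ N →
      Function.Injective f → (∀ i, f i ≤ (i : Fin n)) →
      ∃ g : {i : Fin n // i ∈ S} → Fin n, Function.Injective g ∧ (∀ i, g i ≤ (i : Fin n)) ∧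
        S.attach.image g = S.attach.image f ∧
        ∀ (i : {i : Fin n // i ∈ S}) (hv : g i ∈ S), g ⟨g i, hv⟩ = g i := by
  intro N
  induction N with
  | zero =>
    intro f hcard hinj hflag
    have hfix : ∀ i : {i : Fin n // i ∈ S}, f i = (i : Fin n) := by
      intro i
      by_contra hne
      have : i ∈ S.attach.filter (fun i => f i ≠ (i : Fin n)) := by
        simp [hne]
      have := card_pos.mpr ⟨i, this⟩
      omega
    refine ⟨f, hinj, hflag, rfl, ?_⟩
    intro i hv
    rw [hfix ⟨f i, hv⟩]
  | succ N ih =>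
    intro f hcard hinj hflag
    by_cases hdone : ∀ (i : {i : Fin n // i ∈ S}) (hv : f i ∈ S), f ⟨f i, hv⟩ = f i
    · exact ⟨f, hinj, hflag, rfl, hdone⟩
    · push_neg at hdone
      obtain ⟨i, hv, hne⟩ := hdone
      set v : {i : Fin n // i ∈ S} := ⟨f i, hv⟩ with hvdef
      have hiv : i ≠ v := by
        intro h
        exact hne (by rw [← h])
      have hfine : f i ≠ (i : Fin n) := by
        intro h
        apply hiv
        apply Subtype.ext
        have : (v : Fin n) = f i := rfl
        rw [this, h]
      set f' : {i : Fin n // i ∈ S} → Fin n := f ∘ (Equiv.swap i v) with hf'def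
      have hf'v : f' v = (v : Fin n) := by
        simp only [hf'def, Function.comp_apply, Equiv.swap_apply_right]; rfl
      have hf'i : f' i = f v := by
        simp only [hf'def, Function.comp_apply, Equiv.swap_apply_left]
      have hf'other : ∀ b, b ≠ i → b ≠ v → f' b = f b := by
        intro b h1 h2
        simp only [hf'def, Function.comp_apply, Equiv.swap_apply_of_ne_of_ne h1 h2]
      have hinj' : Function.Injective f' := hinj.comp (Equiv.injective _)
      have hflag' : ∀ b, f' b ≤ (b : Fin n) := by
        intro b
        rcases eq_or_ne b i with rfl | h1
        · rw [hf'i]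
          calc f v ≤ (v : Fin n) := hflag v
            _ = f b := rfl
            _ ≤ (b : Fin n) := hflag b
        rcases eq_or_ne b v with rfl | h2
        · rw [hf'v]
        · rw [hf'other b h1 h2]; exact hflag b
      have himg : S.attach.image f' = S.attach.image f := by
        ext b
        simp only [mem_image, mem_attach, true_and]
        constructor
        · rintro ⟨a, rfl⟩
          exact ⟨Equiv.swap i v a, rfl⟩
        · rintro ⟨a, rfl⟩
          refine ⟨Equiv.swap i v a, ?_⟩
          simp [hf'def]
      have hsub : S.attach.filter (fun b => f' b ≠ (b : Fin n)) ⊆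
          (S.attach.filter (fun b => f b ≠ (b : Fin n))).erase v := by
        intro b hb
        simp only [mem_filter, mem_attach, true_and] at hb
        rw [mem_erase]
        constructor
        · intro h
          subst h
          exact hb hf'v
        · simp only [mem_filter, mem_attach, true_and]
          rcases eq_or_ne b i with rfl | h1
          · exact hfine
          rcases eq_or_ne b v with rfl | h2
          · exact absurd hf'v hb
          · rw [← hf'other b h1 h2]; exact hb
      have hvmem : v ∈ S.attach.filter (fun b => f b ≠ (b : Fin n)) := by
        simp only [mem_filter, mem_attach, true_and]
        exact hne
      have hcard' : (S.attach.filter (fun b => f' b ≠ (b : Fin n))).card ≤ N := by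
        have h1 := card_le_card hsub
        have h2 := card_erase_of_mem hvmem
        have h3 := card_pos.mpr ⟨v, hvmem⟩
        omega
      obtain ⟨g, hg1, hg2, hg3, hg4⟩ := ih f' hcard' hinj' hflag'
      exact ⟨g, hg1, hg2, hg3.trans himg, hg4⟩

theorem exists_optimization (n : ℕ) (hn : 1 ≤ n) (D : Fin n → Finset (Fin n))
    (F : (j : Fin n) → {i : Fin n // i ∈ D j} → Fin n) (hF : F ∈ Fillings n D) :
    ∃ G ∈ Fillings n D,
      (∀ m : Fin n, (D m).attach.image (G m) = (D m).attach.image (F m)) ∧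
      wt n D G = wt n D F ∧
      ∀ (m : Fin n) (i : {i : Fin n // i ∈ D m}) (hv : G m i ∈ D m),
        G m ⟨G m i, hv⟩ = G m i := by
  obtain ⟨hFinj, hFflag⟩ := hF
  have h := fun j => col_aux n (D j) ((D j).attach.filter
      (fun i => F j i ≠ (i : Fin n))).card (F j) le_rfl (hFinj j) (hFflag j)
  choose g hg1 hg2 hg3 hg4 using h
  refine ⟨g, ⟨hg1, hg2⟩, hg3, ?_, hg4⟩
  funext k
  unfold wt
  apply Finset.sum_congr rfl
  intro j _
  rw [filter_card_of_inj _ _ (hg1 j), filter_card_of_inj _ _ (hFinj j), hg3 j]
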